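/- Let P and Q be probability measures on a measurable space (A, F) with P absolutely continuous with respect to Q. Suppose there are constants β₁ ∈ (0,1) and β₂ ∈ [0,1] such that β₂ ≤ dP/dQ(a) ≤ 1/β₁ for Q-almost every a. Then the relative entropy (in nats) satisfies D(P‖Q) ≤ (1/2)·( ln(1/β₁)/(1−β₁) − β₂ )·|P−Q|, where |P−Q| is the total variation distance. -/

import Mathlib

open MeasureTheory

/-- Relative entropy (in nats): `D(P‖Q) = ∫ ln(dP/dQ) dP`. -/
noncomputable def relEntropyNats {A : Type*} [MeasurableSpace A] (P Q : Measure A) : ℝ :=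
  ∫ a, Real.log ((P.rnDeriv Q a).toReal) ∂P

/-- Total variation distance: `|P−Q| = 2 ⨆_{E measurable} |P(E) − Q(E)|`. -/
noncomputable def tvDist {A : Type*} [MeasurableSpace A] (P Q : Measure A) : ℝ :=
  2 * ⨆ E : {E : Set A // MeasurableSet E}, |(P E.1).toReal - (Q E.1).toReal|

lemma aux_abs_mul_log_le {M t : ℝ} (hM : 1 < M) (ht0 : 0 ≤ t) (htM : t ≤ M) :
    |t * Real.log t| ≤ max 1 (M * Real.log M) := by
  rcases le_or_gt t 1 with h1 | h1
  · refine le_trans ?_ (le_max_left _ _)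
    rcases eq_or_lt_of_le ht0 with h0 | h0
    · simp [← h0]
    · have hlog : t * Real.log t ≤ 0 :=
        mul_nonpos_of_nonneg_of_nonpos ht0 (Real.log_nonpos ht0 h1)
      rw [abs_of_nonpos hlog]
      have h2 : Real.log t⁻¹ ≤ t⁻¹ - 1 := Real.log_le_sub_one_of_pos (by positivity)
      rw [Real.log_inv] at h2
      have h3 : -(t * Real.log t) = t * (-Real.log t) := by ring
      rw [h3]
      have h4 : t * (-Real.log t) ≤ t * (t⁻¹ - 1) :=
        mul_le_mul_of_nonneg_left (by linarith) ht0
      have h5 : t * (t⁻¹ - 1) = 1 - t := by field_simp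
      linarith
  · refine le_trans ?_ (le_max_right _ _)
    have hlog : 0 ≤ Real.log t := Real.log_nonneg h1.le
    rw [abs_of_nonneg (by positivity)]
    exact mul_le_mul htM (Real.log_le_log (by linarith) htM) hlog (by linarith)

lemma aux_key_ineq {β₁ β₂ t : ℝ} (h0 : 0 < β₁) (h1 : β₁ < 1) (hb0 : 0 ≤ β₂)
    (hl : β₂ ≤ t) (hu : t ≤ 1 / β₁) :
    t * Real.log t - t + 1 ≤
      (Real.log (1 / β₁) / (1 - β₁) - 1) * max (t - 1) 0 + (1 - β₂) * max (1 - t) 0 := by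
  have ht0 : 0 ≤ t := hb0.trans hl
  rcases lt_trichotomy t 1 with h | h | h
  · -- t < 1
    have hβ₂1 : β₂ < 1 := lt_of_le_of_lt hl h
    rw [max_eq_right (by linarith), max_eq_left (by linarith), mul_zero, zero_add]
    -- secant of x log x from 1 down to β₂ ≤ t
    have hsec := Real.convexOn_mul_log.secant_mono (a := 1) (x := β₂) (y := t)
      (Set.mem_Ici.mpr zero_le_one) (Set.mem_Ici.mpr hb0) (Set.mem_Ici.mpr ht0)
      (ne_of_lt hβ₂1) (ne_of_lt h) hl
    simp only [Real.log_one, mul_zero, one_mul, sub_zero] at hsec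
    -- β₂ log β₂ ≤ β₂^2 - β₂
    have hkey2 : β₂ * Real.log β₂ ≤ β₂ * (β₂ - 1) := by
      rcases eq_or_lt_of_le hb0 with h0' | h0'
      · simp [← h0']
      · exact mul_le_mul_of_nonneg_left (Real.log_le_sub_one_of_pos h0') hb0
    have hr : β₂ ≤ β₂ * Real.log β₂ / (β₂ - 1) :=
      (le_div_iff_of_neg (by linarith)).mpr hkey2
    have hr2 : t * Real.log t ≤ (β₂ * Real.log β₂ / (β₂ - 1)) * (t - 1) :=
      (le_div_iff_of_neg (by linarith)).mp hsec
    have hr3 : (β₂ * Real.log β₂ / (β₂ - 1)) * (t - 1) ≤ β₂ * (t - 1) := by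
      have := mul_le_mul_of_nonpos_right hr (by linarith : t - 1 ≤ 0)
      linarith
    nlinarith
  · subst h; simp
  · -- 1 < t
    have hM : 1 < 1 / β₁ := (one_lt_div h0).mpr h1
    rw [max_eq_left (by linarith), max_eq_right (by linarith), mul_zero, add_zero]
    have hsec := Real.convexOn_mul_log.secant_mono (a := 1) (x := t) (y := 1 / β₁)
      (Set.mem_Ici.mpr zero_le_one) (Set.mem_Ici.mpr ht0) (Set.mem_Ici.mpr (by linarith))
      (ne_of_gt h) (ne_of_gt hM) hu
    simp only [Real.log_one, mul_zero, one_mul, sub_zero] at hsec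
    have hML : (1 / β₁) * Real.log (1 / β₁) / (1 / β₁ - 1) = Real.log (1 / β₁) / (1 - β₁) := by
      rw [div_eq_div_iff (by linarith) (by linarith)]
      field_simp
    rw [hML] at hsec
    have := (div_le_iff₀ (by linarith : (0:ℝ) < t - 1)).mp hsec
    nlinarith

theorem reverse_pinsker_refined {A : Type*} [MeasurableSpace A]
    (P Q : Measure A) [IsProbabilityMeasure P] [IsProbabilityMeasure Q]
    (hPQ : P ≪ Q) (β₁ β₂ : ℝ) (hβ₁ : β₁ ∈ Set.Ioo (0 : ℝ) 1) (hβ₂ : β₂ ∈ Set.Icc (0 : ℝ) 1)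
    (hbound : ∀ᵐ a ∂Q, β₂ ≤ ((P.rnDeriv Q) a).toReal ∧ ((P.rnDeriv Q) a).toReal ≤ 1 / β₁) :
    relEntropyNats P Q ≤ (1 / 2) * (Real.log (1 / β₁) / (1 - β₁) - β₂) * tvDist P Q := by
  obtain ⟨hβ₁0, hβ₁1⟩ := hβ₁
  obtain ⟨hβ₂0, hβ₂1⟩ := hβ₂
  set g : A → ℝ := fun a => (P.rnDeriv Q a).toReal with hgdef
  set L : ℝ := Real.log (1 / β₁) / (1 - β₁) with hLdef
  have hgmeas : Measurable g := (Measure.measurable_rnDeriv P Q).ennreal_toReal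
  have hM1 : 1 < 1 / β₁ := (one_lt_div hβ₁0).mpr hβ₁1
  have hL1 : 1 ≤ L := by
    rw [hLdef, le_div_iff₀ (by linarith)]
    have := Real.log_le_sub_one_of_pos hβ₁0
    rw [Real.log_div one_ne_zero (ne_of_gt hβ₁0), Real.log_one]
    linarith
  -- integrability
  have hInt_g : Integrable g Q := Measure.integrable_toReal_rnDeriv
  have hgnonneg : ∀ a, 0 ≤ g a := fun a => ENNReal.toReal_nonneg
  have hInt_glog : Integrable (fun a => g a * Real.log (g a)) Q := by
    refine ⟨(hgmeas.mul (Real.measurable_log.comp hgmeas)).aestronglyMeasurable,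
      HasFiniteIntegral.of_bounded (C := max 1 ((1 / β₁) * Real.log (1 / β₁))) ?_⟩
    filter_upwards [hbound] with a ⟨_, h2⟩
    exact aux_abs_mul_log_le hM1 (hgnonneg a) h2
  have hIntg1 : ∫ a, g a ∂Q = 1 := by
    rw [hgdef, Measure.integral_toReal_rnDeriv hPQ]
    simp
  have hIntsub : Integrable (fun a => g a - 1) Q := hInt_g.sub (integrable_const 1)
  have hIntpos : Integrable (fun a => max (g a - 1) 0) Q := hIntsub.pos_part
  have hIntsub' : Integrable (fun a => 1 - g a) Q := (integrable_const 1).sub hInt_g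
  have hIntpos' : Integrable (fun a => max (1 - g a) 0) Q := hIntsub'.pos_part
  have hIntA : Integrable (fun a => g a * Real.log (g a) - g a) Q := hInt_glog.sub hInt_g
  -- rewrite relEntropyNats
  have hEq1 : relEntropyNats P Q = ∫ a, g a * Real.log (g a) ∂Q := by
    rw [relEntropyNats,
      ← integral_rnDeriv_smul hPQ (f := fun a => Real.log ((P.rnDeriv Q a).toReal))]
    simp [smul_eq_mul]
    rfl
  -- the set where g > 1 and the quantity T
  set E : Set A := {a | 1 < g a} with hEdef
  have hE : MeasurableSet E := measurableSet_lt measurable_const hgmeas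
  set T : ℝ := (P E).toReal - (Q E).toReal with hTdef
  have hT1 : ∫ a, max (g a - 1) 0 ∂Q = T := by
    have hind : (fun a => max (g a - 1) 0) = E.indicator (fun a => g a - 1) := by
      funext a
      by_cases h : a ∈ E
      · rw [Set.indicator_of_mem h]
        exact max_eq_left (by simp only [hEdef, Set.mem_setOf_eq] at h; linarith)
      · rw [Set.indicator_of_notMem h]
        exact max_eq_right (by simp only [hEdef, Set.mem_setOf_eq, not_lt] at h; linarith)
    rw [hind, integral_indicator hE,
      integral_sub hInt_g.integrableOn (integrableOn_const (measure_ne_top Q E)),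
      hgdef, Measure.setIntegral_toReal_rnDeriv hPQ E]
    simp [hTdef, measureReal_def]
  have hT2 : ∫ a, max (1 - g a) 0 ∂Q = T := by
    have hind : (fun a => max (1 - g a) 0) = fun a => max (g a - 1) 0 - (g a - 1) := by
      funext a
      rcases le_total (g a) 1 with h | h
      · rw [max_eq_left (by linarith), max_eq_right (by linarith)]; ring
      · rw [max_eq_right (by linarith), max_eq_left (by linarith)]; ring
    rw [hind, integral_sub hIntpos hIntsub, hT1,
      integral_sub hInt_g (integrable_const 1), hIntg1]
    simp
  have hTnonneg : 0 ≤ T := by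
    rw [← hT1]
    exact integral_nonneg fun a => le_max_right _ _
  -- T vs tvDist
  have hT_tv : 2 * T ≤ tvDist P Q := by
    rw [tvDist]
    have hbdd : BddAbove (Set.range fun E : {E : Set A // MeasurableSet E} =>
        |(P E.1).toReal - (Q E.1).toReal|) := by
      refine ⟨2, ?_⟩
      rintro x ⟨F, rfl⟩
      have h1 : (P F.1).toReal ≤ 1 := by
        have := ENNReal.toReal_mono (measure_ne_top P Set.univ)
          (measure_mono (Set.subset_univ F.1))
        simpa using this
      have h2 : (Q F.1).toReal ≤ 1 := by
        have := ENNReal.toReal_mono (measure_ne_top Q Set.univ)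
          (measure_mono (Set.subset_univ F.1))
        simpa using this
      have h3 : 0 ≤ (P F.1).toReal := ENNReal.toReal_nonneg
      have h4 : 0 ≤ (Q F.1).toReal := ENNReal.toReal_nonneg
      rw [abs_le]; constructor <;> linarith
    have hle : T ≤ ⨆ E : {E : Set A // MeasurableSet E}, |(P E.1).toReal - (Q E.1).toReal| :=
      le_trans (le_abs_self _) (le_ciSup hbdd ⟨E, hE⟩)
    linarith
  -- main integral inequality
  have hIntRHS : Integrable
      (fun a => (L - 1) * max (g a - 1) 0 + (1 - β₂) * max (1 - g a) 0) Q :=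
    (hIntpos.const_mul _).add (hIntpos'.const_mul _)
  have hIntF : Integrable (fun a => g a * Real.log (g a) - g a + 1) Q :=
    hIntA.add (integrable_const 1)
  have hmono : ∫ a, (g a * Real.log (g a) - g a + 1) ∂Q ≤
      ∫ a, ((L - 1) * max (g a - 1) 0 + (1 - β₂) * max (1 - g a) 0) ∂Q := by
    refine integral_mono_ae hIntF hIntRHS ?_
    filter_upwards [hbound] with a ⟨ha1, ha2⟩
    exact aux_key_ineq hβ₁0 hβ₁1 hβ₂0 ha1 ha2
  have hFeq : ∫ a, (g a * Real.log (g a) - g a + 1) ∂Q = ∫ a, g a * Real.log (g a) ∂Q := by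
    rw [integral_add hIntA (integrable_const 1),
      integral_sub hInt_glog hInt_g, hIntg1]
    simp
  have hRHSeq : ∫ a, ((L - 1) * max (g a - 1) 0 + (1 - β₂) * max (1 - g a) 0) ∂Q =
      (L - 1) * T + (1 - β₂) * T := by
    rw [integral_add (hIntpos.const_mul _) (hIntpos'.const_mul _),
      integral_const_mul, integral_const_mul, hT1, hT2]
  have hmain : relEntropyNats P Q ≤ (L - β₂) * T := by
    rw [hEq1, ← hFeq]
    calc ∫ a, (g a * Real.log (g a) - g a + 1) ∂Q
        ≤ (L - 1) * T + (1 - β₂) * T := by rw [← hRHSeq]; exact hmono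
      _ = (L - β₂) * T := by ring
  have hLβ₂ : 0 ≤ L - β₂ := by linarith
  calc relEntropyNats P Q ≤ (L - β₂) * T := hmain
    _ ≤ (1 / 2) * (L - β₂) * tvDist P Q := by nlinarith
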